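/- Let β > 0 and let Ψ = P_RMGSS⁻¹ 𝒜. The minimal polynomial of Ψ over ℝ has degree at most m + 1. -/

import Mathlib

open Matrix Polynomial

/-- Powers of a product `X * Y` factor through powers of `Y * X`. -/
lemma pow_mul_comm_aux {ι l : Type*} [Fintype ι] [Fintype l]
    [DecidableEq ι] [DecidableEq l]
    (X : Matrix ι l ℝ) (Y : Matrix l ι ℝ) (j : ℕ) :
    (X * Y) ^ (j + 1) = X * (Y * X) ^ j * Y := by
  induction j with
  | zero => rw [zero_add, pow_one, pow_zero, Matrix.mul_one]
  | succ j ih =>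
    rw [pow_succ, ih, pow_succ]
    simp only [Matrix.mul_assoc]

lemma aeval_mul_self_eq {ι l : Type*} [Fintype ι] [Fintype l] [DecidableEq ι] [DecidableEq l]
    (X : Matrix ι l ℝ) (Y : Matrix l ι ℝ) (p : Polynomial ℝ) :
    (aeval (X * Y) p) * (X * Y) = X * (aeval (Y * X) p) * Y := by
  rw [Polynomial.aeval_eq_sum_range (p := p) (X * Y),
      Polynomial.aeval_eq_sum_range (p := p) (Y * X),
      Matrix.sum_mul, Matrix.mul_sum, Matrix.sum_mul]
  refine Finset.sum_congr rfl fun i _ => ?_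
  rw [Matrix.smul_mul, Matrix.mul_smul, Matrix.smul_mul, ← pow_succ,
    pow_mul_comm_aux]

/-- If `Ψ = 1 + X * Y` with inner dimension `l`, the minimal polynomial of `Ψ`
has degree at most `card l + 1`. -/
lemma minpoly_one_add_mul_le {ι l : Type*} [Fintype ι] [Fintype l]
    [DecidableEq ι] [DecidableEq l]
    (X : Matrix ι l ℝ) (Y : Matrix l ι ℝ) :
    (minpoly ℝ (1 + X * Y)).natDegree ≤ Fintype.card l + 1 := by
  set p : Polynomial ℝ := (Y * X).charpoly with hp
  have hpm : p.Monic := Matrix.charpoly_monic _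
  have hpd : p.natDegree = Fintype.card l := Matrix.charpoly_natDegree_eq_dim _
  -- q = p * X annihilates X * Y
  set q : Polynomial ℝ := p * Polynomial.X with hq
  have hqm : q.Monic := hpm.mul monic_X
  have hqd : q.natDegree = Fintype.card l + 1 := by
    rw [hq, hpm.natDegree_mul monic_X, hpd, natDegree_X]
  have hq0 : aeval (X * Y) q = 0 := by
    rw [hq, _root_.map_mul, aeval_X, aeval_mul_self_eq,
      Matrix.aeval_self_charpoly, Matrix.mul_zero, Matrix.zero_mul]
  -- r = q ∘ (X - 1) annihilates 1 + X * Y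
  set r : Polynomial ℝ := q.comp (Polynomial.X - Polynomial.C 1) with hr
  have hrm : r.Monic := hqm.comp (monic_X_sub_C 1) (by rw [natDegree_X_sub_C]; exact one_ne_zero)
  have hrd : r.natDegree = Fintype.card l + 1 := by
    rw [hr, natDegree_comp, natDegree_X_sub_C, mul_one, hqd]
  have hr0 : aeval (1 + X * Y) r = 0 := by
    rw [hr, aeval_comp]
    simpa using hq0
  have := minpoly.min (A := ℝ) (x := 1 + X * Y) hrm hr0
  calc (minpoly ℝ (1 + X * Y)).natDegree ≤ r.natDegree :=
        Polynomial.natDegree_le_natDegree this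
    _ = Fintype.card l + 1 := hrd

theorem RMGSS_preconditioned_minpoly_degree
    (n m : ℕ) (hn : 0 < n) (hm : 0 < m) (hmn : m ≤ n)
    (A : Matrix (Fin n) (Fin n) ℝ) (B : Matrix (Fin m) (Fin n) ℝ)
    (C : Matrix (Fin m) (Fin m) ℝ)
    (hA : A.PosDef) (hC : C.PosSemidef) (hB : B.rank = m)
    (β : ℝ) (hβ : 0 < β)
    (Ψ : Matrix (Fin n ⊕ Fin m) (Fin n ⊕ Fin m) ℝ)
    (hΨ : Ψ = (Matrix.fromBlocks A Bᵀ (-B)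
        (β • (1 : Matrix (Fin m) (Fin m) ℝ) + C))⁻¹ *
      Matrix.fromBlocks A Bᵀ (-B) C) :
    (minpoly ℝ Ψ).natDegree ≤ m + 1 := by
  set P : Matrix (Fin n ⊕ Fin m) (Fin n ⊕ Fin m) ℝ :=
    Matrix.fromBlocks A Bᵀ (-B) (β • (1 : Matrix (Fin m) (Fin m) ℝ) + C) with hP
  -- A is invertible
  have hAunit : IsUnit A.det := isUnit_iff_ne_zero.mpr (ne_of_gt hA.det_pos)
  have : Invertible A := A.invertibleOfIsUnitDet hAunit
  -- the Schur complement is positive definite, hence P is invertible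
  have hSchur : ((β • (1 : Matrix (Fin m) (Fin m) ℝ) + C) - (-B) * ⅟A * Bᵀ).PosDef := by
    have hInv : (⅟A : Matrix (Fin n) (Fin n) ℝ) = A⁻¹ := invOf_eq_nonsing_inv A
    have h1 : (β • (1 : Matrix (Fin m) (Fin m) ℝ)).PosDef := by
      rw [Matrix.smul_one_eq_diagonal]
      exact Matrix.posDef_diagonal_iff.mpr fun _ => hβ
    have h2 : (B * A⁻¹ * Bᵀ).PosSemidef := by
      have : Bᵀ = Bᴴ := by
        ext i j; simp [conjTranspose_apply]
      rw [this]
      exact hA.inv.posSemidef.mul_mul_conjTranspose_same B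
    have : (β • (1 : Matrix (Fin m) (Fin m) ℝ) + C) - (-B) * ⅟A * Bᵀ
        = (β • (1 : Matrix (Fin m) (Fin m) ℝ) + (C + B * A⁻¹ * Bᵀ)) := by
      rw [hInv, Matrix.neg_mul, Matrix.neg_mul, sub_neg_eq_add, add_assoc]
    rw [this]
    exact h1.add_posSemidef (hC.add h2)
  have hPdet : IsUnit P.det := by
    rw [hP, Matrix.det_fromBlocks₁₁]
    exact hAunit.mul (isUnit_iff_ne_zero.mpr (ne_of_gt hSchur.det_pos))
  have hPinv : P⁻¹ * P = 1 := Matrix.nonsing_inv_mul P hPdet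
  -- decompose Ψ = 1 + X * Y with inner dimension m
  set U : Matrix (Fin n ⊕ Fin m) (Fin m) ℝ :=
    Matrix.fromRows (0 : Matrix (Fin n) (Fin m) ℝ) (1 : Matrix (Fin m) (Fin m) ℝ) with hU
  set V : Matrix (Fin m) (Fin n ⊕ Fin m) ℝ :=
    Matrix.fromCols (0 : Matrix (Fin m) (Fin n) ℝ)
      (β • (1 : Matrix (Fin m) (Fin m) ℝ)) with hV
  have hUV : U * V = Matrix.fromBlocks 0 0 0 (β • (1 : Matrix (Fin m) (Fin m) ℝ)) := by
    rw [hU, hV, Matrix.fromRows_mul_fromCols]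
    simp
  have hA' : Matrix.fromBlocks A Bᵀ (-B) C = P - U * V := by
    rw [hUV, hP]
    ext (i | i) (j | j) <;> simp
  have hΨ' : Ψ = 1 + (-(P⁻¹ * U)) * V := by
    rw [hΨ, hA', Matrix.mul_sub, hPinv, ← Matrix.mul_assoc, sub_eq_add_neg, ← Matrix.neg_mul]
  rw [hΨ']
  have := minpoly_one_add_mul_le (-(P⁻¹ * U)) V
  simpa using this
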